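/- arXiv:1811.07049 — 3 statements merged into one kernel-verified Lean document; each statement's English description precedes it below -/
import Mathlib

section
/- Let M(x,ẋ) = J(x)ᵀ N(y(x), J(x)ẋ) J(x), where y : ℝ^m → ℝ^n is differentiable with Jacobian J(x) = ∂_x y(x) and N : ℝ^n × ℝ^n → ℝ^{n×n} is differentiable. Define Ξ_M(x,ẋ) = (1/2) Σ_{i=1}^m ẋ_i ∂_{ẋ} m_i(x,ẋ), where m_i is the i-th column of M, and similarly Ξ_N(y,ẏ) = (1/2) Σ_{j=1}^n ẏ_j ∂_{ẏ} n_j(y,ẏ). Then Ξ_M(x,ẋ) = J(x)ᵀ Ξ_N(y(x), J(x)ẋ) J(x). -/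
open Matrix

/-- Partial derivative of a scalar function on `ℝ^m` in the `k`-th coordinate direction. -/
noncomputable def pd {m : ℕ} (k : Fin m) (f : (Fin m → ℝ) → ℝ) (x : Fin m → ℝ) : ℝ :=
  fderiv ℝ f x (Pi.single k 1)

/-- The Jacobian matrix `J(x) = ∂_x y(x)`. -/
noncomputable def Jac {m n : ℕ} (y : (Fin m → ℝ) → (Fin n → ℝ)) (x : Fin m → ℝ) :
    Matrix (Fin n) (Fin m) ℝ :=
  fun i j => pd j (fun x' => y x' i) x

/-- The velocity-curvature matrix `Ξ_M(x,ẋ) = (1/2) Σ_i ẋ_i ∂_ẋ m_i(x,ẋ)`,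
where `m_i` is the `i`-th column of `M`; its `(j,k)` entry is
`(1/2) Σ_i ẋ_i ∂_{ẋ_k} M_{j i}(x,ẋ)`. -/
noncomputable def XiMat {m : ℕ} (M : (Fin m → ℝ) → Matrix (Fin m) (Fin m) ℝ)
    (v : Fin m → ℝ) : Matrix (Fin m) (Fin m) ℝ :=
  fun j k => (1 / 2) * ∑ i, v i * pd k (fun v' => M v' j i) v

lemma pd_sum {m : ℕ} {ι : Type*} (s : Finset ι) (f : ι → (Fin m → ℝ) → ℝ) (x : Fin m → ℝ)
    (hf : ∀ i ∈ s, DifferentiableAt ℝ (f i) x) (k : Fin m) :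
    pd k (fun x' => ∑ i ∈ s, f i x') x = ∑ i ∈ s, pd k (f i) x := by
  simp [pd, fderiv_fun_sum hf]

lemma pd_const_mul {m : ℕ} (c : ℝ) (f : (Fin m → ℝ) → ℝ) (x : Fin m → ℝ)
    (hf : DifferentiableAt ℝ f x) (k : Fin m) :
    pd k (fun x' => c * f x') x = c * pd k f x := by
  simp [pd, fderiv_const_mul hf, mul_comm]

lemma pd_mul_const {m : ℕ} (c : ℝ) (f : (Fin m → ℝ) → ℝ) (x : Fin m → ℝ)
    (hf : DifferentiableAt ℝ f x) (k : Fin m) :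
    pd k (fun x' => f x' * c) x = pd k f x * c := by
  rw [show (fun x' => f x' * c) = fun x' => c * f x' from by ext x'; ring,
    pd_const_mul c f x hf k, mul_comm]

lemma clm_apply_eq_sum {n : ℕ} (φ : (Fin n → ℝ) →L[ℝ] ℝ) (u : Fin n → ℝ) :
    φ u = ∑ c, u c * φ (Pi.single c 1) := by
  conv_lhs => rw [← Finset.univ_sum_single u]
  rw [map_sum]
  refine Finset.sum_congr rfl fun c _ => ?_
  have : Pi.single c (u c) = u c • (Pi.single c 1 : Fin n → ℝ) := by
    ext a; by_cases h : a = c <;> simp [h, Pi.single_apply]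
  rw [this, _root_.map_smul, smul_eq_mul]

lemma pd_comp_mulVec {m n : ℕ} (J : Matrix (Fin n) (Fin m) ℝ) (g : (Fin n → ℝ) → ℝ)
    (hg : Differentiable ℝ g) (v : Fin m → ℝ) (k : Fin m) :
    pd k (fun v' => g (J.mulVec v')) v = ∑ c, J c k * pd c g (J.mulVec v) := by
  set L : (Fin m → ℝ) →L[ℝ] (Fin n → ℝ) := J.mulVecLin.toContinuousLinearMap with hLdef
  have hLapp : ∀ u, L u = J.mulVec u := fun u => by simp [hLdef]
  have hcomp : fderiv ℝ (fun v' => g (J.mulVec v')) v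
      = (fderiv ℝ g (J.mulVec v)).comp L := by
    have h1 : (fun v' => g (J.mulVec v')) = g ∘ L := by ext v'; simp [hLapp]
    rw [h1, fderiv_comp v (hg _) L.differentiableAt, L.fderiv, hLapp]
  simp only [pd, hcomp, ContinuousLinearMap.comp_apply, hLapp]
  rw [clm_apply_eq_sum (fderiv ℝ g (J.mulVec v)) (J.mulVec (Pi.single k 1))]
  refine Finset.sum_congr rfl fun c _ => ?_
  congr 1
  simp [Matrix.mulVec_single]

lemma sum4 {α β γ δ : Type*} [Fintype α] [Fintype β] [Fintype γ] [Fintype δ]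
    (T : α → β → γ → δ → ℝ) :
    ∑ i, ∑ c, ∑ b, ∑ a, T i c b a = ∑ c, ∑ a, ∑ b, ∑ i, T i c b a := by
  calc ∑ i, ∑ c, ∑ b, ∑ a, T i c b a
      = ∑ c, ∑ i, ∑ b, ∑ a, T i c b a := Finset.sum_comm
    _ = ∑ c, ∑ b, ∑ i, ∑ a, T i c b a :=
        Finset.sum_congr rfl fun c _ => Finset.sum_comm
    _ = ∑ c, ∑ b, ∑ a, ∑ i, T i c b a :=
        Finset.sum_congr rfl fun c _ => Finset.sum_congr rfl fun b _ => Finset.sum_comm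
    _ = ∑ c, ∑ a, ∑ b, ∑ i, T i c b a :=
        Finset.sum_congr rfl fun c _ => Finset.sum_comm

lemma alg {m n : ℕ} (J : Matrix (Fin n) (Fin m) ℝ) (v : Fin m → ℝ)
    (D : Fin n → Fin n → Fin n → ℝ) (j k : Fin m) :
    1/2 * ∑ i, v i * ∑ c, J c k * ∑ b, (∑ a, J a j * D c a b) * J b i
      = ∑ b, (∑ a, J a j * (1/2 * ∑ c, (∑ i, J c i * v i) * D b a c)) * J b k := by
  have L : 1/2 * ∑ i, v i * ∑ c, J c k * ∑ b, (∑ a, J a j * D c a b) * J b i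
      = ∑ i, ∑ c, ∑ b, ∑ a, 1/2 * (v i * J c k * J a j * D c a b * J b i) := by
    simp only [Finset.mul_sum, Finset.sum_mul]
    exact Finset.sum_congr rfl fun i _ => Finset.sum_congr rfl fun c _ =>
      Finset.sum_congr rfl fun b _ => Finset.sum_congr rfl fun a _ => by ring
  have R : ∑ b, (∑ a, J a j * (1/2 * ∑ c, (∑ i, J c i * v i) * D b a c)) * J b k
      = ∑ b, ∑ a, ∑ c, ∑ i, 1/2 * (v i * J b k * J a j * D b a c * J c i) := by
    simp only [Finset.mul_sum, Finset.sum_mul]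
    exact Finset.sum_congr rfl fun b _ => Finset.sum_congr rfl fun a _ =>
      Finset.sum_congr rfl fun c _ => Finset.sum_congr rfl fun i _ => by ring
  rw [L, R]
  exact sum4 fun i c b a => 1/2 * (v i * J c k * J a j * D c a b * J b i)

/-- Pullback of the velocity-curvature term: if
`M(x,ẋ) = J(x)ᵀ N(y(x), J(x)ẋ) J(x)`, then `Ξ_M(x,ẋ) = J(x)ᵀ Ξ_N(y(x), J(x)ẋ) J(x)`. -/
theorem Xi_pullback {m n : ℕ}
    (y : (Fin m → ℝ) → (Fin n → ℝ))
    (N : (Fin n → ℝ) → (Fin n → ℝ) → Matrix (Fin n) (Fin n) ℝ)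
    (hy : ∀ i, Differentiable ℝ fun x => y x i)
    (hN : ∀ i j, Differentiable ℝ fun p : (Fin n → ℝ) × (Fin n → ℝ) => N p.1 p.2 i j)
    (x v : Fin m → ℝ) :
    XiMat (fun v' => (Jac y x)ᵀ * N (y x) ((Jac y x).mulVec v') * Jac y x) v
      = (Jac y x)ᵀ * XiMat (fun w' => N (y x) w') ((Jac y x).mulVec v) * Jac y x := by
  set J : Matrix (Fin n) (Fin m) ℝ := Jac y x with hJ
  set w : Fin n → ℝ := J.mulVec v with hw
  -- differentiability of entries of N (y x) ·
  have hN' : ∀ a b, Differentiable ℝ (fun w' => N (y x) w' a b) := fun a b =>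
    by have := (hN a b).comp (Differentiable.prodMk (differentiable_const (y x)) differentiable_id); exact this
  -- entries of J^T N J as functions of w'
  have hg_eq : ∀ (jj ii : Fin m), (fun w' => (Jᵀ * N (y x) w' * J) jj ii)
      = fun w' => ∑ b, (∑ a, J a jj * N (y x) w' a b) * J b ii := by
    intro jj ii; ext w'
    simp [Matrix.mul_apply, Matrix.transpose_apply, Finset.sum_mul]
  have hg : ∀ (jj ii : Fin m), Differentiable ℝ (fun w' => (Jᵀ * N (y x) w' * J) jj ii) := by
    intro jj ii
    rw [hg_eq]
    exact Differentiable.fun_sum fun b _ =>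
      (Differentiable.fun_sum fun a _ => (hN' a b).const_mul _).mul_const _
  set D : Fin n → Fin n → Fin n → ℝ := fun c a b => pd c (fun w' => N (y x) w' a b) w with hD
  ext j k
  have LHSeq : XiMat (fun v' => Jᵀ * N (y x) (J.mulVec v') * J) v j k
      = 1/2 * ∑ i, v i * ∑ c, J c k * ∑ b, (∑ a, J a j * D c a b) * J b i := by
    simp only [XiMat]
    congr 1
    refine Finset.sum_congr rfl fun i _ => ?_
    congr 1
    rw [pd_comp_mulVec J _ (hg j i) v k]
    refine Finset.sum_congr rfl fun c _ => ?_
    congr 1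
    rw [hg_eq j i, pd_sum _ _ _ (fun b _ => ((Differentiable.fun_sum fun a _ =>
      (hN' a b).const_mul _).mul_const _).differentiableAt) c]
    refine Finset.sum_congr rfl fun b _ => ?_
    rw [pd_mul_const _ _ _ ((Differentiable.fun_sum fun a _ =>
      (hN' a b).const_mul _).differentiableAt) c]
    congr 1
    rw [pd_sum _ _ _ (fun a _ => ((hN' a b).const_mul _).differentiableAt) c]
    exact Finset.sum_congr rfl fun a _ => pd_const_mul _ _ _ (hN' a b).differentiableAt c
  have RHSeq : (Jᵀ * XiMat (fun w' => N (y x) w') w * J) j k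
      = ∑ b, (∑ a, J a j * (1/2 * ∑ c, (∑ i, J c i * v i) * D b a c)) * J b k := by
    have hwc : ∀ c, w c = ∑ i, J c i * v i := fun c => by
      simp [hw, Matrix.mulVec, dotProduct]
    simp only [Matrix.mul_apply, Matrix.transpose_apply, XiMat, hwc, hD]
  rw [LHSeq, RHSeq]
  exact alg J v D j k
end

section
/- Let M_i ∈ ℝ^{n_i × n_i} be symmetric positive definite, J_i ∈ ℝ^{n_i × m}, a_i ∈ ℝ^{n_i}, and c_i ∈ ℝ^{n_i} for i = 1,…,K, and suppose M = Σ_i J_iᵀ M_i J_i is invertible. Then the unique minimizer over a' ∈ ℝ^m of (1/2) Σ_{i=1}^K ‖J_i a' + c_i − a_i‖²_{M_i} is a = M⁻¹ f, where f = Σ_{i=1}^K J_iᵀ M_i (a_i − c_i) and ‖v‖²_{M_i} = vᵀ M_i v. -/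
open Matrix

private lemma sum_mulVec' {ι p q : Type*} [Fintype q] (s : Finset ι)
    (A : ι → Matrix p q ℝ) (x : q → ℝ) :
    (∑ i ∈ s, A i).mulVec x = ∑ i ∈ s, (A i).mulVec x := by
  ext j
  simp [Matrix.mulVec, dotProduct, Matrix.sum_apply, Finset.sum_mul]
  exact Finset.sum_comm

private lemma dotProduct_sum' {ι q : Type*} [Fintype q] (s : Finset ι)
    (d : q → ℝ) (v : ι → q → ℝ) :
    d ⬝ᵥ (∑ i ∈ s, v i) = ∑ i ∈ s, d ⬝ᵥ v i := by
  simp [dotProduct, Finset.mul_sum, Finset.sum_apply]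
  exact Finset.sum_comm

/-- Least-squares characterization of the RMPflow pullback: with `M_i ≻ 0`,
`M = Σ_i J_iᵀ M_i J_i` invertible and `f = Σ_i J_iᵀ M_i (a_i − c_i)`, the unique
minimizer of `a' ↦ (1/2) Σ_i ‖J_i a' + c_i − a_i‖²_{M_i}` is `a = M⁻¹ f`. -/
theorem pullback_least_squares {K m : ℕ} (n : Fin K → ℕ)
    (J : ∀ i : Fin K, Matrix (Fin (n i)) (Fin m) ℝ)
    (M : ∀ i : Fin K, Matrix (Fin (n i)) (Fin (n i)) ℝ)
    (a : ∀ i : Fin K, Fin (n i) → ℝ) (c : ∀ i : Fin K, Fin (n i) → ℝ)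
    (hM : ∀ i, (M i).PosDef)
    (hMtot : IsUnit (∑ i, (J i)ᵀ * M i * J i).det) :
    let Mtot := ∑ i, (J i)ᵀ * M i * J i
    let f := ∑ i, (J i)ᵀ.mulVec ((M i).mulVec (a i - c i))
    let F : (Fin m → ℝ) → ℝ := fun b =>
      (1 / 2) * ∑ i, ((J i).mulVec b + c i - a i) ⬝ᵥ (M i).mulVec ((J i).mulVec b + c i - a i)
    (∀ b, F (Mtot⁻¹.mulVec f) ≤ F b) ∧
    (∀ b, F b = F (Mtot⁻¹.mulVec f) → b = Mtot⁻¹.mulVec f) := by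
  intro Mtot f F
  set astar := Mtot⁻¹.mulVec f with hastar
  have hsym : ∀ i, (M i)ᵀ = M i := by
    intro i
    have := (hM i).1
    simpa [Matrix.IsHermitian] using this
  -- symmetric bilinear form swap
  have swap : ∀ (i : Fin K) (x y : Fin (n i) → ℝ),
      x ⬝ᵥ (M i).mulVec y = y ⬝ᵥ (M i).mulVec x := by
    intro i x y
    rw [Matrix.dotProduct_mulVec, ← Matrix.mulVec_transpose, hsym i, dotProduct_comm]
  -- pull J across the dot product
  have pullJ : ∀ (i : Fin K) (d : Fin m → ℝ) (w : Fin (n i) → ℝ),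
      ((J i).mulVec d) ⬝ᵥ w = d ⬝ᵥ (J i)ᵀ.mulVec w := by
    intro i d w
    rw [dotProduct_comm, Matrix.dotProduct_mulVec, ← Matrix.mulVec_transpose,
      dotProduct_comm]
  have hMtotEq : Mtot = ∑ i, (J i)ᵀ * M i * J i := rfl
  have hMa : Mtot.mulVec astar = f := by
    rw [hastar, Matrix.mulVec_mulVec, Matrix.mul_nonsing_inv _ hMtot, Matrix.one_mulVec]
  -- the first-order condition: ∑ Jᵀ M (J astar + c - a) = 0
  have foc : ∑ i, (J i)ᵀ.mulVec ((M i).mulVec ((J i).mulVec astar + c i - a i)) = 0 := by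
    have : ∀ i : Fin K,
        (J i)ᵀ.mulVec ((M i).mulVec ((J i).mulVec astar + c i - a i))
          = ((J i)ᵀ * M i * J i).mulVec astar
            - (J i)ᵀ.mulVec ((M i).mulVec (a i - c i)) := by
      intro i
      have h1 : (J i).mulVec astar + c i - a i = (J i).mulVec astar - (a i - c i) := by
        abel
      rw [h1, Matrix.mulVec_sub, Matrix.mulVec_sub, Matrix.mulVec_mulVec,
        Matrix.mulVec_mulVec]
    rw [Finset.sum_congr rfl fun i _ => this i, Finset.sum_sub_distrib,
      ← sum_mulVec', hMa]
    simp [f, Mtot]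
  -- main quadratic expansion
  have key : ∀ b : Fin m → ℝ, F b = F astar +
      (1 / 2) * ((b - astar) ⬝ᵥ Mtot.mulVec (b - astar)) := by
    intro b
    set d := b - astar with hd
    have hb : b = astar + d := by rw [hd]; abel
    have expand : ∀ i : Fin K,
        ((J i).mulVec b + c i - a i) ⬝ᵥ (M i).mulVec ((J i).mulVec b + c i - a i)
          = ((J i).mulVec astar + c i - a i) ⬝ᵥ (M i).mulVec ((J i).mulVec astar + c i - a i)
            + 2 * (((J i).mulVec d) ⬝ᵥ (M i).mulVec ((J i).mulVec astar + c i - a i))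
            + ((J i).mulVec d) ⬝ᵥ (M i).mulVec ((J i).mulVec d) := by
      intro i
      have hu : (J i).mulVec b + c i - a i
          = ((J i).mulVec astar + c i - a i) + (J i).mulVec d := by
        rw [hb, Matrix.mulVec_add]; abel
      rw [hu]
      rw [Matrix.mulVec_add, add_dotProduct, dotProduct_add,
        dotProduct_add]
      rw [swap i ((J i).mulVec astar + c i - a i) ((J i).mulVec d)]
      ring
    have crosszero :
        ∑ i, ((J i).mulVec d) ⬝ᵥ (M i).mulVec ((J i).mulVec astar + c i - a i) = 0 := by
      have : ∀ i : Fin K, ((J i).mulVec d) ⬝ᵥ (M i).mulVec ((J i).mulVec astar + c i - a i)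
          = d ⬝ᵥ (J i)ᵀ.mulVec ((M i).mulVec ((J i).mulVec astar + c i - a i)) :=
        fun i => pullJ i d _
      rw [Finset.sum_congr rfl fun i _ => this i, ← dotProduct_sum', foc,
        dotProduct_zero]
    have quadsum :
        ∑ i, ((J i).mulVec d) ⬝ᵥ (M i).mulVec ((J i).mulVec d)
          = d ⬝ᵥ Mtot.mulVec d := by
      have : ∀ i : Fin K, ((J i).mulVec d) ⬝ᵥ (M i).mulVec ((J i).mulVec d)
          = d ⬝ᵥ ((J i)ᵀ * M i * J i).mulVec d := by
        intro i
        rw [pullJ i d _, Matrix.mulVec_mulVec, Matrix.mulVec_mulVec]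
      rw [Finset.sum_congr rfl fun i _ => this i, ← dotProduct_sum']
      congr 1
      rw [hMtotEq, sum_mulVec']
    simp only [F]
    rw [Finset.sum_congr rfl fun i _ => expand i]
    rw [Finset.sum_add_distrib, Finset.sum_add_distrib, ← Finset.mul_sum, crosszero,
      quadsum]
    ring
  -- nonnegativity of the quadratic term
  have qnonneg : ∀ d : Fin m → ℝ, 0 ≤ d ⬝ᵥ Mtot.mulVec d := by
    intro d
    have : d ⬝ᵥ Mtot.mulVec d = ∑ i, ((J i).mulVec d) ⬝ᵥ (M i).mulVec ((J i).mulVec d) := by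
      rw [hMtotEq, sum_mulVec', dotProduct_sum']
      refine Finset.sum_congr rfl fun i _ => ?_
      rw [pullJ i d _, Matrix.mulVec_mulVec, Matrix.mulVec_mulVec]
    rw [this]
    refine Finset.sum_nonneg fun i _ => ?_
    have := (hM i).posSemidef.dotProduct_mulVec_nonneg ((J i).mulVec d)
    simpa using this
  constructor
  · intro b
    rw [key b]
    have := qnonneg (b - astar)
    nlinarith
  · intro b hFb
    rw [key b] at hFb
    have hq : (b - astar) ⬝ᵥ Mtot.mulVec (b - astar) = 0 := by nlinarith
    set d := b - astar with hd
    -- each summand vanishes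
    have hsum : ∑ i, ((J i).mulVec d) ⬝ᵥ (M i).mulVec ((J i).mulVec d) = 0 := by
      have : d ⬝ᵥ Mtot.mulVec d = ∑ i, ((J i).mulVec d) ⬝ᵥ (M i).mulVec ((J i).mulVec d) := by
        rw [hMtotEq, sum_mulVec', dotProduct_sum']
        refine Finset.sum_congr rfl fun i _ => ?_
        rw [pullJ i d _, Matrix.mulVec_mulVec, Matrix.mulVec_mulVec]
      rw [← this, hq]
    have heach : ∀ i : Fin K, ((J i).mulVec d) ⬝ᵥ (M i).mulVec ((J i).mulVec d) = 0 := by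
      have := (Finset.sum_eq_zero_iff_of_nonneg (fun i _ => by
        have := (hM i).posSemidef.dotProduct_mulVec_nonneg ((J i).mulVec d); simpa using this)).mp hsum
      exact fun i => this i (Finset.mem_univ i)
    have hJd : ∀ i : Fin K, (J i).mulVec d = 0 := by
      intro i
      by_contra hne
      have := (hM i).dotProduct_mulVec_pos (x := (J i).mulVec d) hne
      have h2 : (0 : ℝ) < ((J i).mulVec d) ⬝ᵥ (M i).mulVec ((J i).mulVec d) := by
        simpa using this
      rw [heach i] at h2
      exact lt_irrefl 0 h2
    have hMd : Mtot.mulVec d = 0 := by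
      rw [hMtotEq, sum_mulVec']
      refine Finset.sum_eq_zero fun i _ => ?_
      rw [← Matrix.mulVec_mulVec, ← Matrix.mulVec_mulVec, hJd i]
      simp
    have hd0 : d = 0 := by
      have : (Mtot⁻¹ * Mtot).mulVec d = Mtot⁻¹.mulVec (Mtot.mulVec d) := by
        rw [Matrix.mulVec_mulVec]
      rw [Matrix.nonsing_inv_mul _ hMtot, Matrix.one_mulVec, hMd] at this
      simpa using this
    have : b - astar = 0 := hd0
    have := sub_eq_zero.mp this
    exact this
end

section
/- Let w : ℝ^n → ℝ be differentiable with w > 0 and consider the isotropic metric M(x) = w(x)I. The curvature term ξ_M(x,ẋ) = (ẋᵀ∇w(x))ẋ − (1/2)‖ẋ‖²∇w(x) satisfies −M(x)⁻¹ ξ_M(x,ẋ) = (1/2)‖ẋ‖² (I − 2 v̂v̂ᵀ) ∇log w(x) for ẋ ≠ 0, where v̂ = ẋ/‖ẋ‖; that is, the curvature acceleration is (1/2)‖ẋ‖² times the Householder reflection of ∇log w across the hyperplane normal to ẋ. -/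
open scoped RealInnerProductSpace

lemma gradient_log_comp {n : ℕ} (w : EuclideanSpace ℝ (Fin n) → ℝ)
    (x : EuclideanSpace ℝ (Fin n)) (hw : DifferentiableAt ℝ w x) (hwpos : 0 < w x) :
    gradient (fun z => Real.log (w z)) x = (w x)⁻¹ • gradient w x := by
  have h1 : HasGradientAt w (gradient w x) x := hw.hasGradientAt
  have h2 : HasFDerivAt w ((InnerProductSpace.toDual ℝ _) (gradient w x)) x :=
    h1.hasFDerivAt
  have h3 : HasFDerivAt (fun z => Real.log (w z))
      ((w x)⁻¹ • (InnerProductSpace.toDual ℝ _) (gradient w x)) x := by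
    have := (Real.hasDerivAt_log hwpos.ne').comp_hasFDerivAt x h2
    simpa [smul_smul, Function.comp_def] using this
  have h4 : HasGradientAt (fun z => Real.log (w z)) ((w x)⁻¹ • gradient w x) x := by
    rw [hasGradientAt_iff_hasFDerivAt]
    simpa [map_smul] using h3
  exact h4.gradient

/-- Curvature acceleration of the isotropic metric `M(x) = w(x)I`: with
`ξ_M(x,ẋ) = (ẋᵀ∇w)ẋ − (1/2)‖ẋ‖²∇w`, one has
`−M(x)⁻¹ ξ_M(x,ẋ) = (1/2)‖ẋ‖² (I − 2v̂v̂ᵀ) ∇log w(x)`, the Householder reflection of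
`∇log w` across the hyperplane normal to `ẋ`, scaled by `(1/2)‖ẋ‖²`. -/
theorem isotropic_curvature_householder {n : ℕ}
    (w : EuclideanSpace ℝ (Fin n) → ℝ)
    (x v : EuclideanSpace ℝ (Fin n))
    (hw : DifferentiableAt ℝ w x)
    (hwpos : 0 < w x)
    (hv : v ≠ 0) :
    -((w x)⁻¹ • (⟪v, gradient w x⟫ • v - ((1 / 2) * ‖v‖ ^ 2) • gradient w x))
      = ((1 / 2) * ‖v‖ ^ 2) •
          (gradient (fun z => Real.log (w z)) x
            - (2 * ⟪‖v‖⁻¹ • v, gradient (fun z => Real.log (w z)) x⟫) • (‖v‖⁻¹ • v)) := by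
  rw [gradient_log_comp w x hw hwpos]
  have hvn : ‖v‖ ≠ 0 := norm_ne_zero_iff.mpr hv
  rw [real_inner_smul_left, inner_smul_right]
  match_scalars <;> field_simp <;> ring
end
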